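/- For every partition λ = (λ_1 ≥ ⋯ ≥ λ_k) of length k, the symmetric polynomial P_λ − m_λ ∈ ℤ[x_1,…,x_k] has total degree strictly less than |λ| (it is zero if |λ| = 0). Equivalently, P_λ = m_λ + ∑_{μ, |μ|<|λ|} a_{λμ} m_μ with integer coefficients a_{λμ}. -/

import Mathlib

open scoped BigOperators

/-- The variable `x_i` viewed inside the fraction field of `ℤ[x_1, …, x_k]`. -/
noncomputable def Xz (k : ℕ) (i : Fin k) : FractionRing (MvPolynomial (Fin k) ℤ) :=
  algebraMap (MvPolynomial (Fin k) ℤ) (FractionRing (MvPolynomial (Fin k) ℤ)) (MvPolynomial.X i)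

/-- `mul(λ) = ∏_i m_i(λ)!`, where `m_i(λ)` is the number of parts of `λ` equal to `i`. -/
def mulOf (k : ℕ) (lam : Fin k → ℕ) : ℕ :=
  ∏ i ∈ Finset.image lam Finset.univ,
    (Finset.univ.filter (fun s => lam s = i)).card.factorial

/-- The symmetrization
`∑_{σ ∈ S_k} ∏_s x_{σ(s)}^{λ_s} · ∏_{1≤i<j≤k} (x_{σ(i)} − x_{σ(j)} + 1)/(x_{σ(i)} − x_{σ(j)})`,
an element of the fraction field of `ℤ[x_1, …, x_k]`; it equals `mul(λ) · P_λ` where `P_λ` is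
the Hall–Littlewood polynomial. -/
noncomputable def hlSum (k : ℕ) (lam : Fin k → ℕ) : FractionRing (MvPolynomial (Fin k) ℤ) :=
  ∑ σ : Equiv.Perm (Fin k),
    (∏ s : Fin k, Xz k (σ s) ^ lam s) *
      ∏ i : Fin k, ∏ j ∈ Finset.Ioi i,
        (Xz k (σ i) - Xz k (σ j) + 1) / (Xz k (σ i) - Xz k (σ j))

open MvPolynomial Finset


variable {ι : Type*} {R : Type*} [CommRing R]

lemma hc_top_ne_zero (f : MvPolynomial ι R) (hf : f ≠ 0) :
    homogeneousComponent f.totalDegree f ≠ 0 := by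
  obtain ⟨d, hd, hdeq⟩ := Finset.exists_mem_eq_sup f.support (support_nonempty.2 hf)
    (fun d => d.sum fun _ e => e)
  intro h
  have hc := coeff_homogeneousComponent f.totalDegree f d
  rw [h] at hc
  have hds : d.degree = f.totalDegree := hdeq.symm
  simp only [hds, if_pos rfl, coeff_zero] at hc
  exact (mem_support_iff.1 hd) hc.symm

lemma sub_hc_top (f : MvPolynomial ι R) :
    f - homogeneousComponent f.totalDegree f = 0 ∨
      (f - homogeneousComponent f.totalDegree f).totalDegree < f.totalDegree := by
  set g := f - homogeneousComponent f.totalDegree f with hg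
  have hcsupp : ∀ d ∈ g.support, (d.sum fun _ e => e) < f.totalDegree := by
    intro d hd
    by_contra hlt
    push_neg at hlt
    apply mem_support_iff.1 hd
    have hc := coeff_homogeneousComponent f.totalDegree f d
    have hdeg : d.degree = d.sum fun _ e => e := rfl
    rcases eq_or_lt_of_le hlt with h | h
    · simp only [hg, coeff_sub, hc, hdeg, if_pos h.symm, sub_self]
    · simp [hg, coeff_sub, hc, hdeg, coeff_eq_zero_of_totalDegree_lt h]
  by_cases h0 : g = 0
  · exact Or.inl h0
  · right
    rw [MvPolynomial.totalDegree]
    rcases Nat.eq_zero_or_pos f.totalDegree with h | h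
    · exfalso
      obtain ⟨d, hd⟩ := support_nonempty.2 h0
      exact Nat.not_lt_zero _ (h ▸ hcsupp d hd)
    · exact Finset.sup_lt_iff h |>.2 hcsupp

lemma tdeg_mul_eq [IsDomain R] (f g : MvPolynomial ι R) (hf : f ≠ 0) (hg : g ≠ 0) :
    (f * g).totalDegree = f.totalDegree + g.totalDegree := by
  refine le_antisymm (totalDegree_mul f g) ?_
  by_contra hlt
  push_neg at hlt
  set df := f.totalDegree
  set dg := g.totalDegree
  set a := homogeneousComponent df f with ha
  set b := homogeneousComponent dg g with hb
  have hane : a ≠ 0 := hc_top_ne_zero f hf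
  have hbne : b ≠ 0 := hc_top_ne_zero g hg
  have hahom : a.IsHomogeneous df := homogeneousComponent_isHomogeneous df f
  have hbhom : b.IsHomogeneous dg := homogeneousComponent_isHomogeneous dg g
  -- claim : hc (df+dg) (f*g) = a*b
  have key : homogeneousComponent (df + dg) (f * g) = a * b := by
    have hsplit : f * g = a * b + ((f - a) * g + a * (g - b)) := by ring
    have h1 : homogeneousComponent (df + dg) (a * b) = a * b := by
      rw [homogeneousComponent_of_mem ((mem_homogeneousSubmodule _ _).2 (hahom.mul hbhom))]
      simp
    have h2 : homogeneousComponent (df + dg) ((f - a) * g) = 0 := by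
      rcases sub_hc_top f with h | h <;> rw [← ha] at h
      · rw [h, zero_mul, map_zero]
      · by_cases hz : (f - a) * g = 0
        · rw [hz, map_zero]
        · apply homogeneousComponent_eq_zero
          calc ((f - a) * g).totalDegree ≤ (f - a).totalDegree + dg := totalDegree_mul _ _
          _ < df + dg := by omega
    have h3 : homogeneousComponent (df + dg) (a * (g - b)) = 0 := by
      rcases sub_hc_top g with h | h <;> rw [← hb] at h
      · rw [h, mul_zero, map_zero]
      · by_cases hz : a * (g - b) = 0
        · rw [hz, map_zero]
        · apply homogeneousComponent_eq_zero
          calc (a * (g - b)).totalDegree ≤ a.totalDegree + (g - b).totalDegree :=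
                totalDegree_mul _ _
          _ < df + dg := by
                have := hahom.totalDegree_le
                omega
    rw [hsplit, map_add, map_add, h1, h2, h3, add_zero, add_zero]
  have : homogeneousComponent (df + dg) (f * g) = 0 := homogeneousComponent_eq_zero _ _ hlt
  rw [key] at this
  exact mul_ne_zero hane hbne this

lemma tdeg_prod_eq [IsDomain R] {α : Type*} (s : Finset α) (f : α → MvPolynomial ι R)
    (h : ∀ a ∈ s, f a ≠ 0) :
    (∏ a ∈ s, f a).totalDegree = ∑ a ∈ s, (f a).totalDegree := by
  induction s using Finset.cons_induction with
  | empty => simp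
  | cons a s ha ih =>
    rw [Finset.prod_cons, Finset.sum_cons,
      tdeg_mul_eq _ _ (h a (Finset.mem_cons_self a s))
        (Finset.prod_ne_zero_iff.2 fun b hb => h b (Finset.mem_cons_of_mem hb)),
      ih fun b hb => h b (Finset.mem_cons_of_mem hb)]

/-! ### specific constructions -/


noncomputable def Vp (k : ℕ) (σ : Equiv.Perm (Fin k)) : MvPolynomial (Fin k) ℤ :=
  ∏ i : Fin k, ∏ j ∈ Finset.Ioi i, (X (σ i) - X (σ j))

noncomputable def Wp (k : ℕ) (σ : Equiv.Perm (Fin k)) : MvPolynomial (Fin k) ℤ :=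
  ∏ i : Fin k, ∏ j ∈ Finset.Ioi i, (X (σ i) - X (σ j) + 1)

noncomputable def monP (k : ℕ) (lam : Fin k → ℕ) (σ : Equiv.Perm (Fin k)) :
    MvPolynomial (Fin k) ℤ :=
  ∏ s : Fin k, X (σ s) ^ lam s

noncomputable def Frac (k : ℕ) (σ : Equiv.Perm (Fin k)) :
    FractionRing (MvPolynomial (Fin k) ℤ) :=
  ∏ i : Fin k, ∏ j ∈ Finset.Ioi i, (Xz k (σ i) - Xz k (σ j) + 1) / (Xz k (σ i) - Xz k (σ j))

lemma X_sub_X_ne_zero {k : ℕ} {a b : Fin k} (h : a ≠ b) :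
    (X a - X b : MvPolynomial (Fin k) ℤ) ≠ 0 :=
  sub_ne_zero.2 fun hh => h (X_injective hh)

lemma X_sub_X_deg {k : ℕ} {a b : Fin k} (h : a ≠ b) :
    (X a - X b : MvPolynomial (Fin k) ℤ).totalDegree = 1 := by
  refine le_antisymm ((totalDegree_sub _ _).trans (by simp)) ?_
  have hco : coeff (Finsupp.single a 1) (X a - X b : MvPolynomial (Fin k) ℤ) = 1 := by
    rw [coeff_sub]
    simp [coeff_X', Finsupp.single_eq_single_iff, h.symm, Ne.symm h]
  have hmem : Finsupp.single a 1 ∈ (X a - X b : MvPolynomial (Fin k) ℤ).support := by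
    rw [mem_support_iff, hco]; exact one_ne_zero
  have := le_totalDegree hmem
  simpa using this

lemma Vp_ne_zero {k : ℕ} (σ : Equiv.Perm (Fin k)) : Vp k σ ≠ 0 := by
  rw [Vp]
  refine Finset.prod_ne_zero_iff.2 fun i _ => Finset.prod_ne_zero_iff.2 fun j hj => ?_
  exact X_sub_X_ne_zero fun hh => (Finset.mem_Ioi.1 hj).ne (σ.injective hh)

lemma Vp_deg {k : ℕ} (σ : Equiv.Perm (Fin k)) :
    (Vp k σ).totalDegree = ∑ i : Fin k, (Finset.Ioi i).card := by
  rw [Vp, tdeg_prod_eq Finset.univ (fun i => ∏ j ∈ Finset.Ioi i, (X (σ i) - X (σ j)))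
    (fun i _ => Finset.prod_ne_zero_iff.2 fun j hj =>
      X_sub_X_ne_zero fun hh => (Finset.mem_Ioi.1 hj).ne (σ.injective hh))]
  refine Finset.sum_congr rfl fun i _ => ?_
  rw [tdeg_prod_eq (Finset.Ioi i) (fun j => (X (σ i) - X (σ j)))
    (fun j hj => X_sub_X_ne_zero fun hh => (Finset.mem_Ioi.1 hj).ne (σ.injective hh))]
  rw [Finset.sum_congr rfl fun j hj => X_sub_X_deg
    (fun hh => (Finset.mem_Ioi.1 hj).ne (σ.injective hh) : σ i ≠ σ j)]
  simp

lemma WV_deg {k : ℕ} (σ : Equiv.Perm (Fin k))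
    (hN : 0 < ∑ i : Fin k, (Finset.Ioi i).card) :
    (Wp k σ - Vp k σ).totalDegree < ∑ i : Fin k, (Finset.Ioi i).card := by
  classical
  set S : Finset ((_ : Fin k) × Fin k) := Finset.univ.sigma fun i => Finset.Ioi i with hS
  have hmemS : ∀ p ∈ S, p.1 ≠ p.2 := by
    intro p hp
    have := (Finset.mem_sigma.1 hp).2
    exact (Finset.mem_Ioi.1 this).ne
  have hcard : S.card = ∑ i : Fin k, (Finset.Ioi i).card := Finset.card_sigma _ _
  have hV : Vp k σ = ∏ p ∈ S, (X (σ p.1) - X (σ p.2)) := by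
    rw [Vp, Finset.prod_sigma']
  have hW : Wp k σ = ∑ t ∈ S.powerset, ∏ p ∈ t, (X (σ p.1) - X (σ p.2)) := by
    rw [Wp, Finset.prod_sigma', Finset.prod_add]
    simp
    rfl
  have hWV : Wp k σ - Vp k σ = ∑ t ∈ S.powerset.erase S, ∏ p ∈ t, (X (σ p.1) - X (σ p.2)) := by
    rw [hW, hV, ← Finset.add_sum_erase _ _ (Finset.mem_powerset_self S)]
    ring
  have hS0 : (⊥ : ℕ) < S.card := by rw [bot_eq_zero, hcard]; exact hN
  rw [hWV, ← hcard]
  refine lt_of_le_of_lt (totalDegree_finset_sum _ _) ?_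
  rw [Finset.sup_lt_iff hS0]
  intro t ht
  obtain ⟨htne, htp⟩ := Finset.mem_erase.1 ht
  have htsub : t ⊆ S := Finset.mem_powerset.1 htp
  calc (∏ p ∈ t, (X (σ p.1) - X (σ p.2) : MvPolynomial (Fin k) ℤ)).totalDegree
      ≤ ∑ p ∈ t, (X (σ p.1) - X (σ p.2) : MvPolynomial (Fin k) ℤ).totalDegree :=
        totalDegree_finset_prod _ _
    _ ≤ ∑ _p ∈ t, 1 := Finset.sum_le_sum fun p hp => by
        rw [X_sub_X_deg fun hh => hmemS p (htsub hp) (σ.injective hh)]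
    _ = t.card := by simp
    _ < S.card := Finset.card_lt_card (Finset.ssubset_iff_subset_ne.2 ⟨htsub, htne⟩)

lemma keyIdentity (k : ℕ) (lam : Fin k → ℕ) (P M : MvPolynomial (Fin k) ℤ)
    (hP : hlSum k lam
        = (mulOf k lam : FractionRing (MvPolynomial (Fin k) ℤ)) *
            algebraMap (MvPolynomial (Fin k) ℤ) (FractionRing (MvPolynomial (Fin k) ℤ)) P)
    (hM : ∑ σ : Equiv.Perm (Fin k), ∏ s : Fin k,
            (MvPolynomial.X (σ s) : MvPolynomial (Fin k) ℤ) ^ lam s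
          = (mulOf k lam : MvPolynomial (Fin k) ℤ) * M) :
    (mulOf k lam : MvPolynomial (Fin k) ℤ) * (P - M) * ∏ σ : Equiv.Perm (Fin k), Vp k σ
      = ∑ σ : Equiv.Perm (Fin k),
          monP k lam σ * (Wp k σ - Vp k σ) * ∏ τ ∈ Finset.univ.erase σ, Vp k τ := by
  classical
  have hinj : Function.Injective
      (algebraMap (MvPolynomial (Fin k) ℤ) (FractionRing (MvPolynomial (Fin k) ℤ))) :=
    IsFractionRing.injective _ _
  apply hinj
  set φ := algebraMap (MvPolynomial (Fin k) ℤ) (FractionRing (MvPolynomial (Fin k) ℤ)) with hφ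
  have hφV : ∀ σ : Equiv.Perm (Fin k),
      φ (Vp k σ) = ∏ i : Fin k, ∏ j ∈ Finset.Ioi i, (Xz k (σ i) - Xz k (σ j)) := by
    intro σ
    simp only [Vp, Xz, map_prod, map_sub, hφ]
  have hφW : ∀ σ : Equiv.Perm (Fin k),
      φ (Wp k σ) = ∏ i : Fin k, ∏ j ∈ Finset.Ioi i, (Xz k (σ i) - Xz k (σ j) + 1) := by
    intro σ
    simp only [Wp, Xz, map_prod, map_add, map_sub, map_one, hφ]
  have hφm : ∀ σ : Equiv.Perm (Fin k),
      φ (monP k lam σ) = ∏ s : Fin k, Xz k (σ s) ^ lam s := by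
    intro σ
    simp only [monP, Xz, map_prod, map_pow, hφ]
  have hXzne : ∀ a b : Fin k, a ≠ b → Xz k a - Xz k b ≠ 0 := by
    intro a b hab
    refine sub_ne_zero.2 fun hh => hab (X_injective (hinj hh))
  -- key cancellation per permutation
  have key : ∀ σ : Equiv.Perm (Fin k), Frac k σ * φ (Vp k σ) = φ (Wp k σ) := by
    intro σ
    rw [hφV, hφW, Frac, ← Finset.prod_mul_distrib]
    refine Finset.prod_congr rfl fun i _ => ?_
    rw [← Finset.prod_mul_distrib]
    refine Finset.prod_congr rfl fun j hj => ?_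
    exact div_mul_cancel₀ _ (hXzne _ _ fun hh =>
      (Finset.mem_Ioi.1 hj).ne (σ.injective hh))
  -- hlSum in terms of monP and Frac
  have hhl : hlSum k lam = ∑ σ : Equiv.Perm (Fin k), φ (monP k lam σ) * Frac k σ := by
    rw [hlSum]
    exact Finset.sum_congr rfl fun σ _ => by rw [hφm, Frac]
  -- φ of difference
  have hφD : φ ((mulOf k lam : MvPolynomial (Fin k) ℤ) * (P - M))
      = ∑ σ : Equiv.Perm (Fin k), φ (monP k lam σ) * (Frac k σ - 1) := by
    have h2 : (mulOf k lam : FractionRing (MvPolynomial (Fin k) ℤ)) * φ M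
        = ∑ σ : Equiv.Perm (Fin k), φ (monP k lam σ) := by
      have := congrArg φ hM
      rw [map_sum, map_mul, map_natCast] at this
      rw [← this]
      exact (Finset.sum_congr rfl fun σ _ => by rw [monP]).symm
    rw [map_mul, map_sub, map_natCast, mul_sub, ← hP, h2, hhl]
    rw [← Finset.sum_sub_distrib]
    exact Finset.sum_congr rfl fun σ _ => by ring
  -- main computation
  rw [map_mul, map_sum, hφD, Finset.sum_mul]
  refine Finset.sum_congr rfl fun σ _ => ?_
  have hU : (∏ τ : Equiv.Perm (Fin k), Vp k τ)
      = Vp k σ * ∏ τ ∈ Finset.univ.erase σ, Vp k τ :=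
    (Finset.mul_prod_erase _ _ (Finset.mem_univ σ)).symm
  rw [map_mul, map_mul, hU, map_mul]
  have hfs : (Frac k σ - 1) * φ (Vp k σ) = φ (Wp k σ) - φ (Vp k σ) := by
    rw [sub_mul, one_mul, key]
  calc φ (monP k lam σ) * (Frac k σ - 1) * (φ (Vp k σ) * φ (∏ τ ∈ Finset.univ.erase σ, Vp k τ))
      = φ (monP k lam σ) * ((Frac k σ - 1) * φ (Vp k σ)) *
          φ (∏ τ ∈ Finset.univ.erase σ, Vp k τ) := by ring
    _ = φ (monP k lam σ) * (φ (Wp k σ) - φ (Vp k σ)) *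
          φ (∏ τ ∈ Finset.univ.erase σ, Vp k τ) := by rw [hfs]
    _ = φ (monP k lam σ) * φ (Wp k σ - Vp k σ) * φ (∏ τ ∈ Finset.univ.erase σ, Vp k τ) := by
          rw [map_sub]

/-- for every partition `λ` of length `k`, writing `P` for the Hall–Littlewood
polynomial `P_λ` (characterized by `mul(λ)·P_λ = hlSum λ` in the fraction field) and `M` for
the monomial symmetric polynomial `m_λ` (characterized by
`mul(λ)·m_λ = ∑_{σ ∈ S_k} ∏_s x_{σ(s)}^{λ_s}`), the difference `P_λ − m_λ` is either zero or
has total degree strictly less than `|λ| = λ_1 + ⋯ + λ_k`. -/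
theorem stmt_3 (k : ℕ) (lam : Fin k → ℕ) (hlam : Antitone lam)
    (P M : MvPolynomial (Fin k) ℤ)
    (hP : hlSum k lam
        = (mulOf k lam : FractionRing (MvPolynomial (Fin k) ℤ)) *
            algebraMap (MvPolynomial (Fin k) ℤ) (FractionRing (MvPolynomial (Fin k) ℤ)) P)
    (hM : ∑ σ : Equiv.Perm (Fin k), ∏ s : Fin k,
            (MvPolynomial.X (σ s) : MvPolynomial (Fin k) ℤ) ^ lam s
          = (mulOf k lam : MvPolynomial (Fin k) ℤ) * M) :
    P - M = 0 ∨ (P - M).totalDegree < ∑ s : Fin k, lam s := by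
  classical
  by_cases hPM : P - M = 0
  · exact Or.inl hPM
  right
  have hkey := keyIdentity k lam P M hP hM
  have hmul0 : (mulOf k lam : MvPolynomial (Fin k) ℤ) ≠ 0 := by
    have : mulOf k lam ≠ 0 := by
      rw [mulOf]
      exact Finset.prod_ne_zero_iff.2 fun i _ => Nat.factorial_ne_zero _
    exact_mod_cast Nat.cast_ne_zero.2 this
  have hD0 : (mulOf k lam : MvPolynomial (Fin k) ℤ) * (P - M) ≠ 0 := mul_ne_zero hmul0 hPM
  have hU0 : (∏ σ : Equiv.Perm (Fin k), Vp k σ) ≠ 0 :=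
    Finset.prod_ne_zero_iff.2 fun σ _ => Vp_ne_zero σ
  set N := ∑ i : Fin k, (Finset.Ioi i).card with hN
  set c := Fintype.card (Equiv.Perm (Fin k)) with hc
  have hc1 : 1 ≤ c := Fintype.card_pos
  -- if N = 0 then Wp = Vp and the RHS is 0, contradiction
  have hNpos : 0 < N := by
    rcases Nat.eq_zero_or_pos N with h0 | h
    · exfalso
      have hWVz : ∀ σ : Equiv.Perm (Fin k), Wp k σ - Vp k σ = 0 := by
        intro σ
        have hIoi : ∀ i : Fin k, Finset.Ioi i = (∅ : Finset (Fin k)) := by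
          intro i
          have := Finset.sum_eq_zero_iff.1 (hN ▸ h0) i (Finset.mem_univ i)
          exact Finset.card_eq_zero.1 this
        rw [Wp, Vp]
        simp [hIoi]
      rw [Finset.sum_eq_zero (fun σ _ => by rw [hWVz σ]; ring)] at hkey
      exact mul_ne_zero hD0 hU0 hkey
    · exact h
  -- degrees
  have hdegU : (∏ σ : Equiv.Perm (Fin k), Vp k σ).totalDegree = c * N := by
    rw [tdeg_prod_eq _ _ fun σ _ => Vp_ne_zero σ]
    rw [Finset.sum_congr rfl fun σ _ => Vp_deg σ, Finset.sum_const, Finset.card_univ,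
      smul_eq_mul, ← hN, ← hc]
  have hdegD : ((mulOf k lam : MvPolynomial (Fin k) ℤ) * (P - M)).totalDegree
      = (P - M).totalDegree := by
    rw [tdeg_mul_eq _ _ hmul0 hPM]
    have : ((mulOf k lam : ℕ) : MvPolynomial (Fin k) ℤ) = C ((mulOf k lam : ℕ) : ℤ) := by
      push_cast
      rfl
    rw [this, totalDegree_C, zero_add]
  -- bound on RHS degree
  have hbound : ∀ σ : Equiv.Perm (Fin k),
      (monP k lam σ * (Wp k σ - Vp k σ) * ∏ τ ∈ Finset.univ.erase σ, Vp k τ).totalDegree + 1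
        ≤ (∑ s : Fin k, lam s) + c * N := by
    intro σ
    have hm : (monP k lam σ).totalDegree ≤ ∑ s : Fin k, lam s := by
      rw [monP]
      refine (totalDegree_finset_prod _ _).trans (Finset.sum_le_sum fun s _ => ?_)
      exact (totalDegree_pow _ _).trans (by simp)
    have hwv : (Wp k σ - Vp k σ).totalDegree < N := WV_deg σ hNpos
    have herase : (∏ τ ∈ Finset.univ.erase σ, Vp k τ).totalDegree = (c - 1) * N := by
      rw [tdeg_prod_eq _ _ fun τ _ => Vp_ne_zero τ,
        Finset.sum_congr rfl fun τ _ => Vp_deg τ, Finset.sum_const,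
        Finset.card_erase_of_mem (Finset.mem_univ σ), Finset.card_univ, smul_eq_mul,
        ← hN, ← hc]
    have h1 : (monP k lam σ * (Wp k σ - Vp k σ) * ∏ τ ∈ Finset.univ.erase σ, Vp k τ).totalDegree
        ≤ (monP k lam σ).totalDegree + (Wp k σ - Vp k σ).totalDegree
          + (∏ τ ∈ Finset.univ.erase σ, Vp k τ).totalDegree :=
      (totalDegree_mul _ _).trans (Nat.add_le_add_right (totalDegree_mul _ _) _)
    have hsub : (c - 1) * N = c * N - N := by rw [Nat.sub_one_mul]
    have hle : N ≤ c * N := Nat.le_mul_of_pos_left N hc1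
    omega
  have hdegE : (∑ σ : Equiv.Perm (Fin k),
      monP k lam σ * (Wp k σ - Vp k σ) * ∏ τ ∈ Finset.univ.erase σ, Vp k τ).totalDegree + 1
        ≤ (∑ s : Fin k, lam s) + c * N := by
    have := totalDegree_finset_sum Finset.univ
      (fun σ : Equiv.Perm (Fin k) =>
        monP k lam σ * (Wp k σ - Vp k σ) * ∏ τ ∈ Finset.univ.erase σ, Vp k τ)
    have hsup : (Finset.univ.sup fun σ : Equiv.Perm (Fin k) =>
        (monP k lam σ * (Wp k σ - Vp k σ) * ∏ τ ∈ Finset.univ.erase σ, Vp k τ).totalDegree)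
          ≤ (∑ s : Fin k, lam s) + c * N - 1 := by
      refine Finset.sup_le fun σ _ => ?_
      have := hbound σ
      omega
    have hcN : 1 ≤ c * N := Nat.mul_pos hc1 hNpos
    omega
  have hDU : ((mulOf k lam : MvPolynomial (Fin k) ℤ) * (P - M)
      * ∏ σ : Equiv.Perm (Fin k), Vp k σ).totalDegree
        = (P - M).totalDegree + c * N := by
    rw [tdeg_mul_eq _ _ hD0 hU0, hdegD, hdegU]
  rw [hkey] at hDU
  omega
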